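/- Let q be a prime power and let d, k, v be integers with d even, 2 ≤ d/2 < k < d ≤ 2v/3, and k + d/2 ≤ v. Then A_q(v−k, 2(d−k); d/2) ≤ ([v−k choose k−d/2]_q · [k choose 1]_q / ([k−d/2 choose 1]_q · [d/2 choose k−d/2]_q)) · q^{v−k−d/2}. -/

import Mathlib

open Module

/-- The subspace of `F_q^v` of vectors whose first `k` coordinates vanish
(denoted `Γ` in the paper); its complement (as a set of vectors) is `Δ`. -/
def Gamma (K : Type) [Field K] (k v : ℕ) : Submodule K (Fin v → K) where
  carrier := {x | ∀ j : Fin v, (j : ℕ) < k → x j = 0}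
  add_mem' := by
    intro a b ha hb j hj
    simp [ha j hj, hb j hj]
  zero_mem' := by
    intro j hj
    rfl
  smul_mem' := by
    intro c x hx j hj
    simp [hx j hj]

/-- The subspace distance `d_S(U,W) = dim(U+W) - dim(U ∩ W)`. -/
noncomputable def sDist {K : Type} [Field K] {v : ℕ}
    (U W : Submodule K (Fin v → K)) : ℕ :=
  finrank K ↥(U ⊔ W) - finrank K ↥(U ⊓ W)

/-- A constant dimension code of dimension `k` and minimum subspace distance `d`. -/
def IsCDC (K : Type) [Field K] (v : ℕ) (d k : ℤ)
    (C : Set (Submodule K (Fin v → K))) : Prop :=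
  (∀ U ∈ C, (finrank K U : ℤ) = k) ∧
  ∀ U ∈ C, ∀ W ∈ C, U ≠ W → d ≤ (sDist U W : ℤ)

/-- `A_q(v,d;k)`: the maximum cardinality of a `(v,M,d;k)_q` CDC. -/
noncomputable def Amax (K : Type) [Field K] (v : ℕ) (d k : ℤ) : ℕ :=
  sSup {n | ∃ C : Set (Submodule K (Fin v → K)), IsCDC K v d k C ∧ C.ncard = n}

/-- Row `i` of the `k × v` matrix `(I_k | A)`. -/
def liftRow {K : Type} [Field K] {k v : ℕ} (A : Matrix (Fin k) (Fin (v - k)) K)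
    (i : Fin k) : Fin v → K := fun j =>
  if (j : ℕ) < k then (if (i : ℕ) = (j : ℕ) then 1 else 0)
  else if h2 : (j : ℕ) - k < v - k then A i ⟨(j : ℕ) - k, h2⟩ else 0

/-- `M` is a `(v,d;k)_q` lifted MRD code: `M = { rowspan (I_k | A) : A ∈ R }`
for a `[k × (v-k), q^((v-k)(k-d/2+1)), d/2]_q` rank metric code `R`. -/
def IsLMRD (q : ℕ) (K : Type) [Field K] (v d k : ℕ)
    (M : Set (Submodule K (Fin v → K))) : Prop :=
  ∃ R : Set (Matrix (Fin k) (Fin (v - k)) K),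
    R.ncard = q ^ ((v - k) * (k - d / 2 + 1)) ∧
    (∀ A ∈ R, ∀ B ∈ R, A ≠ B → d / 2 ≤ (A - B).rank) ∧
    M = {U | ∃ A ∈ R, U = Submodule.span K (Set.range (liftRow A))}

/-- The Gaussian binomial coefficient `[a choose b]_q`, defined to be `0`
unless `0 ≤ b ≤ a`. -/
noncomputable def qBin (q : ℕ) (a b : ℤ) : ℚ :=
  if 0 ≤ b ∧ b ≤ a then
    ∏ i ∈ Finset.range b.toNat,
      ((q : ℚ) ^ a - (q : ℚ) ^ (i : ℤ)) / ((q : ℚ) ^ b - (q : ℚ) ^ (i : ℤ))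
  else 0

/-- `[[w, u; c]]_q = q^(u*c) * [w-u choose c]_q` for `0 ≤ c ≤ w-u`, else `0`. -/
noncomputable def qBinD (q : ℕ) (w u c : ℤ) : ℚ :=
  if 0 ≤ c ∧ c ≤ w - u then (q : ℚ) ^ (u * c) * qBin q (w - u) c else 0



section AuxStmt17
open Finset
variable {K : Type} [Field K] [Fintype K]





noncomputable def fiberEquiv {V : Type} [AddCommGroup V] [Module K V] [FiniteDimensional K V]
    {r : ℕ} (T : Submodule K V) (hT : finrank K ↥T = r) :
    {s : {s : Fin r → V // LinearIndependent K s} // Submodule.span K (Set.range s.1) = T}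
      ≃ {t : Fin r → ↥T // LinearIndependent K t} where
  toFun s := ⟨fun i => ⟨s.1.1 i, by
      have h : s.1.1 i ∈ Submodule.span K (Set.range s.1.1) :=
        Submodule.subset_span (Set.mem_range_self i)
      rwa [s.2] at h⟩,
    LinearIndependent.of_comp T.subtype s.1.2⟩
  invFun t := ⟨⟨T.subtype ∘ t.1, t.2.map' T.subtype T.ker_subtype⟩, by
    have hspan : Submodule.span K (Set.range t.1) = ⊤ := by
      apply t.2.span_eq_top_of_card_eq_finrank'
      simp [hT]
    rw [Set.range_comp, Submodule.span_image, hspan, Submodule.map_subtype_top]⟩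
  left_inv s := by ext i; rfl
  right_inv t := by ext i; rfl

lemma grass_mul {V : Type} [AddCommGroup V] [Module K V] [FiniteDimensional K V]
    {r : ℕ} (hr : r ≤ finrank K V) :
    Nat.card {T : Submodule K V // finrank K ↥T = r} *
        ∏ i : Fin r, (Fintype.card K ^ r - Fintype.card K ^ (i : ℕ))
      = ∏ i : Fin r, (Fintype.card K ^ finrank K V - Fintype.card K ^ (i : ℕ)) := by
  have hV : Finite V := Module.finite_of_finite K
  classical
  have := Fintype.ofFinite V
  let f : {s : Fin r → V // LinearIndependent K s} → {T : Submodule K V // finrank K ↥T = r} :=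
    fun s => ⟨Submodule.span K (Set.range s.1), by
      rw [finrank_span_eq_card s.2]; simp⟩
  have h1 : Nat.card {s : Fin r → V // LinearIndependent K s}
      = ∑ T : {T : Submodule K V // finrank K ↥T = r}, Nat.card {s // f s = T} := by
    calc Nat.card {s : Fin r → V // LinearIndependent K s}
        = Nat.card ((T : {T : Submodule K V // finrank K ↥T = r}) × {s // f s = T}) :=
          Nat.card_congr (Equiv.sigmaFiberEquiv f).symm
      _ = _ := by
          rw [Nat.card_eq_fintype_card, Fintype.card_sigma]
          exact Finset.sum_congr rfl fun T _ => (Nat.card_eq_fintype_card).symm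
  have h2 : ∀ T : {T : Submodule K V // finrank K ↥T = r},
      Nat.card {s // f s = T} = ∏ i : Fin r, (Fintype.card K ^ r - Fintype.card K ^ (i : ℕ)) := by
    intro T
    have e1 : {s // f s = T} ≃
        {s : {s : Fin r → V // LinearIndependent K s} //
          Submodule.span K (Set.range s.1) = T.1} :=
      Equiv.subtypeEquivRight (fun s => by
        constructor
        · intro h; exact congrArg Subtype.val h
        · intro h; exact Subtype.ext h)
    rw [Nat.card_congr (e1.trans (fiberEquiv T.1 T.2))]
    have : FiniteDimensional K ↥T.1 := inferInstance
    have := card_linearIndependent (K := K) (V := ↥T.1) (k := r) (by rw [T.2])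
    rw [this, T.2]
  have h3 : Nat.card {s : Fin r → V // LinearIndependent K s}
      = Nat.card {T : Submodule K V // finrank K ↥T = r} *
        ∏ i : Fin r, (Fintype.card K ^ r - Fintype.card K ^ (i : ℕ)) := by
    rw [h1, Finset.sum_congr rfl fun T _ => h2 T, Finset.sum_const, Finset.card_univ,
      ← Nat.card_eq_fintype_card, smul_eq_mul]
  rw [← h3, card_linearIndependent (K := K) (V := V) hr]


noncomputable def subEquiv {V : Type} [AddCommGroup V] [Module K V] [FiniteDimensional K V]
    (U : Submodule K V) (r : ℕ) :
    {T' : Submodule K ↥U // finrank K ↥T' = r} ≃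
      {T : Submodule K V // finrank K ↥T = r ∧ T ≤ U} where
  toFun T' := ⟨Submodule.map U.subtype T'.1,
    ⟨by rw [Submodule.finrank_map_subtype_eq]; exact T'.2, Submodule.map_subtype_le U T'.1⟩⟩
  invFun T := ⟨Submodule.comap U.subtype T.1, by
    have h : Submodule.map U.subtype (Submodule.comap U.subtype T.1) = T.1 := by
      rw [Submodule.map_comap_subtype, inf_eq_right.mpr T.2.2]
    have := Submodule.finrank_map_subtype_eq U (Submodule.comap U.subtype T.1)
    rw [h] at this; rw [← this]; exact T.2.1⟩
  left_inv T' := by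
    apply Subtype.ext
    apply Submodule.map_injective_of_injective U.injective_subtype
    show Submodule.map U.subtype (Submodule.comap U.subtype (Submodule.map U.subtype T'.1))
      = Submodule.map U.subtype T'.1
    rw [Submodule.map_comap_subtype, inf_eq_right.mpr (Submodule.map_subtype_le U T'.1)]
  right_inv T := by
    apply Subtype.ext
    show Submodule.map U.subtype (Submodule.comap U.subtype T.1) = T.1
    rw [Submodule.map_comap_subtype, inf_eq_right.mpr T.2.2]


lemma cdc_count {V : Type} [AddCommGroup V] [Module K V] [FiniteDimensional K V]
    (C : Set (Submodule K V)) {m r : ℕ}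
    (hC : ∀ U ∈ C, finrank K ↥U = m)
    (hint : ∀ U ∈ C, ∀ W ∈ C, U ≠ W → finrank K ↥(U ⊓ W) < r)
    (hrm : r ≤ m) (hm : m ≤ finrank K V) :
    C.ncard * ∏ i : Fin r, (Fintype.card K ^ m - Fintype.card K ^ (i : ℕ))
      ≤ ∏ i : Fin r, (Fintype.card K ^ finrank K V - Fintype.card K ^ (i : ℕ)) := by
  classical
  have hfinV : Finite V := Module.finite_of_finite K
  have hfinS : Finite (Submodule K V) :=
    Finite.of_injective (fun U => (U : Set V)) SetLike.coe_injective
  have := Fintype.ofFinite (Submodule K V)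
  have hCfin : C.Finite := Set.toFinite C
  set Cf : Finset (Submodule K V) := hCfin.toFinset with hCf
  set A : Submodule K V → Finset (Submodule K V) :=
    fun U => Finset.univ.filter (fun T => finrank K ↥T = r ∧ T ≤ U) with hA
  set G1 : Finset (Submodule K V) := Finset.univ.filter (fun T => finrank K ↥T = r) with hG1
  have hdisj : ∀ U ∈ Cf, ∀ W ∈ Cf, U ≠ W → Disjoint (A U) (A W) := by
    intro U hU W hW hUW
    rw [Finset.disjoint_left]
    intro T hTU hTW
    simp only [hA, Finset.mem_filter] at hTU hTW
    have hle : T ≤ U ⊓ W := le_inf hTU.2.2 hTW.2.2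
    have h1 : r ≤ finrank K ↥(U ⊓ W) := hTU.2.1 ▸ Submodule.finrank_mono hle
    have h2 := hint U (hCfin.mem_toFinset.mp hU) W (hCfin.mem_toFinset.mp hW) hUW
    omega
  have hsub : Cf.biUnion A ⊆ G1 := by
    intro T hT
    rcases Finset.mem_biUnion.mp hT with ⟨U, _, hTU⟩
    simp only [hA, Finset.mem_filter] at hTU
    exact Finset.mem_filter.mpr ⟨Finset.mem_univ _, hTU.2.1⟩
  have hsum : ∑ U ∈ Cf, (A U).card ≤ G1.card := by
    rw [← Finset.card_biUnion hdisj]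
    exact Finset.card_le_card hsub
  have hAcard : ∀ U ∈ Cf, (A U).card *
      ∏ i : Fin r, (Fintype.card K ^ r - Fintype.card K ^ (i : ℕ))
      = ∏ i : Fin r, (Fintype.card K ^ m - Fintype.card K ^ (i : ℕ)) := by
    intro U hU
    have hUm : finrank K ↥U = m := hC U (hCfin.mem_toFinset.mp hU)
    have e := subEquiv (K := K) U r
    have h1 : (A U).card = Nat.card {T' : Submodule K ↥U // finrank K ↥T' = r} := by
      rw [Nat.card_congr e, Nat.card_eq_fintype_card, Fintype.card_subtype]
    rw [h1]
    have := grass_mul (K := K) (V := ↥U) (r := r) (by rw [hUm]; exact hrm)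
    rwa [hUm] at this
  have hGcard : G1.card * ∏ i : Fin r, (Fintype.card K ^ r - Fintype.card K ^ (i : ℕ))
      = ∏ i : Fin r, (Fintype.card K ^ finrank K V - Fintype.card K ^ (i : ℕ)) := by
    have h1 : G1.card = Nat.card {T : Submodule K V // finrank K ↥T = r} := by
      rw [Nat.card_eq_fintype_card, Fintype.card_subtype]
    rw [h1]
    exact grass_mul (le_trans hrm hm)
  have hncard : C.ncard = Cf.card := Set.ncard_eq_toFinset_card C hCfin
  calc C.ncard * ∏ i : Fin r, (Fintype.card K ^ m - Fintype.card K ^ (i : ℕ))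
      = ∑ U ∈ Cf, ((A U).card * ∏ i : Fin r, (Fintype.card K ^ r - Fintype.card K ^ (i : ℕ))) := by
        rw [Finset.sum_congr rfl hAcard, Finset.sum_const, smul_eq_mul, hncard]
    _ = (∑ U ∈ Cf, (A U).card) * ∏ i : Fin r, (Fintype.card K ^ r - Fintype.card K ^ (i : ℕ)) := by
        rw [Finset.sum_mul]
    _ ≤ G1.card * ∏ i : Fin r, (Fintype.card K ^ r - Fintype.card K ^ (i : ℕ)) :=
        Nat.mul_le_mul_right _ hsum
    _ = _ := hGcard


lemma qBin_nat (q a b : ℕ) (h : b ≤ a) :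
    qBin q (a : ℤ) (b : ℤ) =
      ∏ i ∈ Finset.range b, (((q:ℚ)^a - (q:ℚ)^i) / ((q:ℚ)^b - (q:ℚ)^i)) := by
  rw [qBin, if_pos ⟨Int.natCast_nonneg b, by exact_mod_cast h⟩]
  simp [zpow_natCast]

lemma core_ineq (Q : ℚ) (hQ : 2 ≤ Q) (n m y : ℕ) (hy : 1 ≤ y) (hym : y + 1 ≤ m)
    (hmn : m ≤ n) :
    (Q^n - Q^y) * (Q^y - 1) ≤ (Q^(y+m) - 1) * Q^(n-m) * (Q^m - Q^y) := by
  have hQ1 : (1:ℚ) ≤ Q := by linarith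
  set A := Q^y with hA'
  set B := Q^m with hB'
  set C := Q^(n-m) with hC'
  have hA : 2 ≤ A := by
    calc (2:ℚ) = 2^1 := by norm_num
    _ ≤ Q^1 := by simpa using hQ
    _ ≤ Q^y := pow_le_pow_right₀ hQ1 hy
  have hBA : 2*A ≤ B := by
    calc 2*A ≤ Q*A := by nlinarith
    _ = Q^(y+1) := by rw [hA', pow_succ]; ring
    _ ≤ Q^m := pow_le_pow_right₀ hQ1 hym
  have hC : 1 ≤ C := one_le_pow₀ hQ1
  have hQn : Q^n = C * B := by rw [hC', hB', ← pow_add]; congr 1; omega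
  have hQk : Q^(y+m) = A * B := by rw [hA', hB', pow_add]
  rw [hQn, hQk]
  have h1 : (0:ℚ) ≤ B*(B-A) - (B-1) := by nlinarith
  have hCA : (0:ℚ) ≤ C*A := by nlinarith
  have key : (0:ℚ) ≤ C*A*(B*(B-A) - (B-1)) + A*(A-1) := by
    have h2 := mul_nonneg hCA h1
    nlinarith
  nlinarith [key]

lemma ratio_le (q n m y k : ℕ) (hq : 2 ≤ q) (hy : 1 ≤ y) (hym : y + 1 ≤ m)
    (hmn : m ≤ n) (hk : k = y + m) :
    (∏ i ∈ range (y+1), ((q:ℚ)^n - (q:ℚ)^i)) / (∏ i ∈ range (y+1), ((q:ℚ)^m - (q:ℚ)^i))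
      ≤ (∏ i ∈ range y, (((q:ℚ)^n - (q:ℚ)^i) / ((q:ℚ)^y - (q:ℚ)^i)))
          * (∏ i ∈ range 1, (((q:ℚ)^k - (q:ℚ)^i) / ((q:ℚ)^1 - (q:ℚ)^i)))
          / ((∏ i ∈ range 1, (((q:ℚ)^y - (q:ℚ)^i) / ((q:ℚ)^1 - (q:ℚ)^i)))
              * (∏ i ∈ range y, (((q:ℚ)^m - (q:ℚ)^i) / ((q:ℚ)^y - (q:ℚ)^i))))
          * (q:ℚ)^(n-m) := by
  have hQ : (2:ℚ) ≤ (q:ℚ) := by exact_mod_cast hq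
  have hQ1 : (1:ℚ) < (q:ℚ) := by linarith
  have hterm : ∀ a i : ℕ, i < a → (0:ℚ) < (q:ℚ)^a - (q:ℚ)^i := by
    intro a i hia
    have := pow_lt_pow_right₀ hQ1 hia
    linarith
  have hX : (0:ℚ) < ∏ i ∈ range y, ((q:ℚ)^n - (q:ℚ)^i) :=
    Finset.prod_pos (fun i hi => hterm n i (lt_of_lt_of_le (mem_range.mp hi) (by omega)))
  have hZ : (0:ℚ) < ∏ i ∈ range y, ((q:ℚ)^m - (q:ℚ)^i) :=
    Finset.prod_pos (fun i hi => hterm m i (lt_of_lt_of_le (mem_range.mp hi) (by omega)))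
  have hW : (0:ℚ) < ∏ i ∈ range y, ((q:ℚ)^y - (q:ℚ)^i) :=
    Finset.prod_pos (fun i hi => hterm y i (mem_range.mp hi))
  have ha : (0:ℚ) < (q:ℚ)^y - 1 := by
    have := hterm y 0 (by omega); simpa using this
  have hb : (0:ℚ) < (q:ℚ) - 1 := by linarith
  have hc : (0:ℚ) < (q:ℚ)^k - 1 := by
    have := hterm k 0 (by omega); simpa using this
  have hE : (0:ℚ) < (q:ℚ)^(n-m) := by positivity
  -- rewrite RHS
  have hRHS : (∏ i ∈ range y, (((q:ℚ)^n - (q:ℚ)^i) / ((q:ℚ)^y - (q:ℚ)^i)))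
          * (∏ i ∈ range 1, (((q:ℚ)^k - (q:ℚ)^i) / ((q:ℚ)^1 - (q:ℚ)^i)))
          / ((∏ i ∈ range 1, (((q:ℚ)^y - (q:ℚ)^i) / ((q:ℚ)^1 - (q:ℚ)^i)))
              * (∏ i ∈ range y, (((q:ℚ)^m - (q:ℚ)^i) / ((q:ℚ)^y - (q:ℚ)^i))))
          * (q:ℚ)^(n-m)
      = ((∏ i ∈ range y, ((q:ℚ)^n - (q:ℚ)^i)) * (((q:ℚ)^k - 1) * (q:ℚ)^(n-m)))
          / ((∏ i ∈ range y, ((q:ℚ)^m - (q:ℚ)^i)) * ((q:ℚ)^y - 1)) := by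
    simp only [Finset.prod_div_distrib, prod_range_one]
    rw [pow_zero, pow_one]
    have hZ' := hZ.ne'
    have hW' := hW.ne'
    have ha' := ha.ne'
    have hb' := hb.ne'
    field_simp
  rw [hRHS, prod_range_succ, prod_range_succ]
  rw [div_le_div_iff₀ (mul_pos hZ (hterm m y (by omega))) (mul_pos hZ ha)]
  have core := core_ineq (q:ℚ) hQ n m y hy hym hmn
  rw [← hk] at core
  nlinarith [mul_le_mul_of_nonneg_left core (le_of_lt (mul_pos hX hZ)), mul_pos hX hZ]

lemma cast_prod_sub (q a r : ℕ) (hq : 1 ≤ q) (hra : r ≤ a) :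
    ((∏ i : Fin r, (q^a - q^(i:ℕ)) : ℕ) : ℚ)
      = ∏ i ∈ Finset.range r, ((q:ℚ)^a - (q:ℚ)^i) := by
  rw [Fin.prod_univ_eq_prod_range (fun i => q^a - q^i) r, Nat.cast_prod]
  refine Finset.prod_congr rfl fun i hi => ?_
  rw [Nat.cast_sub (Nat.pow_le_pow_right hq
    (le_of_lt (lt_of_lt_of_le (Finset.mem_range.mp hi) hra)))]
  push_cast
  ring


end AuxStmt17

/-- for `2 ≤ d/2 < k < d ≤ 2v/3` and `k + d/2 ≤ v`, with `c = 1`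
and `y = k - d/2`, `A_q(v-k,2(d-k);d/2)` is at most the second summand of
Proposition 2. -/
theorem stmt17 (q : ℕ) (K : Type) [Field K] [Fintype K] (hq : Fintype.card K = q)
    (v d k : ℕ) (hd : Even d) (hd2 : 2 ≤ d / 2) (hdk : d / 2 < k) (hkd : k < d)
    (h2v3 : 3 * d ≤ 2 * v) (hkv : k + d / 2 ≤ v) :
    (Amax K (v - k) (2 * ((d : ℤ) - (k : ℤ))) ((d : ℤ) / 2) : ℚ)
      ≤ qBin q ((v : ℤ) - k) ((k : ℤ) - (d : ℤ) / 2) * qBin q (k : ℤ) 1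
          / (qBin q ((k : ℤ) - (d : ℤ) / 2) 1 * qBin q ((d : ℤ) / 2) ((k : ℤ) - (d : ℤ) / 2))
          * (q : ℚ) ^ ((v : ℤ) - k - (d : ℤ) / 2) := by
  classical
  obtain ⟨t, ht⟩ := hd
  set n : ℕ := v - k with hn
  set m : ℕ := d / 2 with hm
  set y : ℕ := k - m with hy
  have hd2m : d = 2 * m := by omega
  have hy1 : 1 ≤ y := by omega
  have hym : y + 1 ≤ m := by omega
  have hmn : m ≤ n := by omega
  have hkym : k = y + m := by omega
  have hq2 : 2 ≤ q := hq ▸ Fintype.one_lt_card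
  have hdint : (d : ℤ) / 2 = (m : ℤ) := by omega
  have hvk : ((v : ℤ) - k) = (n : ℤ) := by omega
  have hky : ((k : ℤ) - (d : ℤ) / 2) = (y : ℤ) := by omega
  have hpow : ((v : ℤ) - k - (d : ℤ) / 2) = ((n - m : ℕ) : ℤ) := by omega
  have hfr : finrank K (Fin n → K) = n := by
    simp [Module.finrank_fin_fun]
  -- the RHS in product form
  have hQ : (2:ℚ) ≤ (q:ℚ) := by exact_mod_cast hq2
  have hterm : ∀ a i : ℕ, i < a → (0:ℚ) < (q:ℚ)^a - (q:ℚ)^i := by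
    intro a i hia
    have := pow_lt_pow_right₀ (by linarith : (1:ℚ) < (q:ℚ)) hia
    linarith
  set RHS : ℚ := qBin q ((v : ℤ) - k) ((k : ℤ) - (d : ℤ) / 2) * qBin q (k : ℤ) 1
          / (qBin q ((k : ℤ) - (d : ℤ) / 2) 1 * qBin q ((d : ℤ) / 2) ((k : ℤ) - (d : ℤ) / 2))
          * (q : ℚ) ^ ((v : ℤ) - k - (d : ℤ) / 2) with hRHS
  have hRHSeq : RHS = (∏ i ∈ Finset.range y, (((q:ℚ)^n - (q:ℚ)^i) / ((q:ℚ)^y - (q:ℚ)^i)))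
          * (∏ i ∈ Finset.range 1, (((q:ℚ)^k - (q:ℚ)^i) / ((q:ℚ)^1 - (q:ℚ)^i)))
          / ((∏ i ∈ Finset.range 1, (((q:ℚ)^y - (q:ℚ)^i) / ((q:ℚ)^1 - (q:ℚ)^i)))
              * (∏ i ∈ Finset.range y, (((q:ℚ)^m - (q:ℚ)^i) / ((q:ℚ)^y - (q:ℚ)^i))))
          * (q:ℚ)^(n-m) := by
    rw [hRHS, hpow, hvk, hky, hdint]
    rw [show ((1:ℤ)) = ((1:ℕ):ℤ) by norm_num]
    rw [qBin_nat q n y (by omega), qBin_nat q k 1 (by omega), qBin_nat q y 1 (by omega),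
      qBin_nat q m y (by omega), zpow_natCast]
  -- bound each element of the sSup set
  have hmain : ∀ x ∈ {x | ∃ C : Set (Submodule K (Fin n → K)),
      IsCDC K n (2 * ((d : ℤ) - (k : ℤ))) ((d : ℤ) / 2) C ∧ C.ncard = x},
      (x : ℚ) ≤ RHS := by
    rintro x ⟨C, ⟨hCdim, hCdist⟩, rfl⟩
    have hCm : ∀ U ∈ C, finrank K ↥U = m := by
      intro U hU
      have := hCdim U hU
      rw [hdint] at this
      exact_mod_cast this
    have hCint : ∀ U ∈ C, ∀ W ∈ C, U ≠ W → finrank K ↥(U ⊓ W) < y + 1 := by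
      intro U hU W hW hUW
      have hdist := hCdist U hU W hW hUW
      have hsum := Submodule.finrank_sup_add_finrank_inf_eq U W
      rw [hCm U hU, hCm W hW] at hsum
      unfold sDist at hdist
      omega
    have hcount := cdc_count (K := K) C hCm hCint (by omega : y + 1 ≤ m)
      (by rw [hfr]; exact hmn)
    rw [hfr, hq] at hcount
    have hc1 : (C.ncard : ℚ) * (∏ i ∈ Finset.range (y+1), ((q:ℚ)^m - (q:ℚ)^i))
        ≤ ∏ i ∈ Finset.range (y+1), ((q:ℚ)^n - (q:ℚ)^i) := by
      rw [← cast_prod_sub q m (y+1) (by omega) (by omega),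
        ← cast_prod_sub q n (y+1) (by omega) (by omega)]
      exact_mod_cast hcount
    have hZpos : (0:ℚ) < ∏ i ∈ Finset.range (y+1), ((q:ℚ)^m - (q:ℚ)^i) :=
      Finset.prod_pos fun i hi => hterm m i (lt_of_lt_of_le (Finset.mem_range.mp hi) (by omega))
    have hc2 : (C.ncard : ℚ) ≤ (∏ i ∈ Finset.range (y+1), ((q:ℚ)^n - (q:ℚ)^i))
        / (∏ i ∈ Finset.range (y+1), ((q:ℚ)^m - (q:ℚ)^i)) :=
      (le_div_iff₀ hZpos).mpr hc1
    calc (C.ncard : ℚ) ≤ _ := hc2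
      _ ≤ _ := by
        rw [hRHSeq]
        exact ratio_le q n m y k hq2 hy1 hym hmn hkym
  -- conclude via the supremum
  have hRHS0 : (0:ℚ) ≤ RHS := by
    have := hmain 0 ⟨∅, ⟨⟨fun U hU => absurd hU (Set.notMem_empty U),
      fun U hU => absurd hU (Set.notMem_empty U)⟩, by simp⟩⟩
    exact_mod_cast le_trans (by norm_num) this
  have hsup : Amax K n (2 * ((d : ℤ) - (k : ℤ))) ((d : ℤ) / 2) ≤ ⌊RHS⌋₊ := by
    apply csSup_le'
    intro x hx
    exact Nat.le_floor (hmain x hx)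
  calc (Amax K (v - k) (2 * ((d : ℤ) - (k : ℤ))) ((d : ℤ) / 2) : ℚ)
      ≤ (⌊RHS⌋₊ : ℚ) := by exact_mod_cast hsup
    _ ≤ RHS := Nat.floor_le hRHS0
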